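/- Let ξ₁, …, ξ_k be independent non-negative random variables on a probability space, each with 0 < E[ξᵢ] < ∞, and let a₁, …, a_k be positive real numbers. Let φ : [0,∞) → [0,∞) be a convex, continuously differentiable function such that for some constants C > 0 and q ≥ 1 one has φ(x) ≤ C(1 + x^q) for all x ≥ 0, and assume E[ξᵢ^q] < ∞ for each i. Then E[ φ( Σᵢ aᵢ · (ξᵢ/(1+ξᵢ)) / E[ξᵢ/(1+ξᵢ)] ) ] ≤ E[ φ( Σᵢ aᵢ · ξᵢ / E[ξᵢ] ) ]. -/

import Mathlib

open MeasureTheory ProbabilityTheory Real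

lemma aux13_tangent {φ : ℝ → ℝ} (hconv : ConvexOn ℝ (Set.Ici (0:ℝ)) φ)
    (hdiff : DifferentiableOn ℝ φ (Set.Ici (0:ℝ))) {t₀ x y : ℝ} (ht₀ : 0 ≤ t₀)
    (hx : 0 ≤ x) (hy : 0 ≤ y)
    (hcase : (t₀ ≤ y ∧ y ≤ x) ∨ (x ≤ y ∧ y ≤ t₀)) :
    derivWithin φ (Set.Ici 0) t₀ * (x - y) ≤ φ x - φ y := by
  set c := derivWithin φ (Set.Ici (0:ℝ)) t₀ with hc
  have hmono := hconv.monotoneOn_derivWithin hdiff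
  have hxm : x ∈ Set.Ici (0:ℝ) := Set.mem_Ici.mpr hx
  have hym : y ∈ Set.Ici (0:ℝ) := Set.mem_Ici.mpr hy
  have ht₀m : t₀ ∈ Set.Ici (0:ℝ) := Set.mem_Ici.mpr ht₀
  rcases hcase with ⟨h1, h2⟩ | ⟨h1, h2⟩
  · rcases eq_or_lt_of_le h2 with rfl | hlt
    · simp
    · have hs : derivWithin φ (Set.Ici 0) y ≤ slope φ y x :=
        hconv.derivWithin_le_slope hym hxm hlt (hdiff y hym)
      have hcy : c ≤ derivWithin φ (Set.Ici 0) y := hmono ht₀m hym h1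
      have hxy : (0:ℝ) < x - y := sub_pos.mpr hlt
      rw [slope_def_field] at hs
      calc c * (x - y) ≤ (φ x - φ y) / (x - y) * (x - y) :=
            mul_le_mul_of_nonneg_right (hcy.trans hs) hxy.le
        _ = φ x - φ y := div_mul_cancel₀ _ hxy.ne'
  · rcases eq_or_lt_of_le h1 with rfl | hlt
    · simp
    · have hs : slope φ x y ≤ derivWithin φ (Set.Ici 0) y :=
        hconv.slope_le_derivWithin hxm hym hlt (hdiff y hym)
      have hcy : derivWithin φ (Set.Ici 0) y ≤ c := hmono hym ht₀m h2
      have hxy : (0:ℝ) < y - x := sub_pos.mpr hlt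
      rw [slope_def_field] at hs
      have h3 : φ y - φ x ≤ c * (y - x) := by
        calc φ y - φ x = (φ y - φ x) / (y - x) * (y - x) := (div_mul_cancel₀ _ hxy.ne').symm
          _ ≤ c * (y - x) := mul_le_mul_of_nonneg_right (hs.trans hcy) hxy.le
      linarith

lemma aux13_sum_rpow_le {k : ℕ} (w : Fin k → ℝ) (hw : ∀ i, 0 ≤ w i) {q : ℝ} (hq : 1 ≤ q) :
    (∑ i, w i) ^ q ≤ (k : ℝ) ^ q * ∑ i, w i ^ q := by
  rcases Nat.eq_zero_or_pos k with rfl | hk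
  · simp [Real.zero_rpow (by linarith : q ≠ 0)]
  · obtain ⟨i₀, -, hmax⟩ := Finset.exists_max_image Finset.univ w ⟨⟨0, hk⟩, Finset.mem_univ _⟩
    have h1 : ∑ i, w i ≤ (k : ℝ) * w i₀ := by
      calc ∑ i, w i ≤ Finset.univ.card • w i₀ :=
            Finset.sum_le_card_nsmul _ _ _ (fun i _ => hmax i (Finset.mem_univ i))
        _ = (k : ℝ) * w i₀ := by simp [nsmul_eq_mul]
    calc (∑ i, w i) ^ q ≤ ((k : ℝ) * w i₀) ^ q :=
          Real.rpow_le_rpow (Finset.sum_nonneg fun i _ => hw i) h1 (by linarith)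
      _ = (k : ℝ) ^ q * w i₀ ^ q := Real.mul_rpow (Nat.cast_nonneg k) (hw i₀)
      _ ≤ (k : ℝ) ^ q * ∑ i, w i ^ q := by
          apply mul_le_mul_of_nonneg_left _ (Real.rpow_nonneg (Nat.cast_nonneg k) q)
          exact Finset.single_le_sum (fun i _ => Real.rpow_nonneg (hw i) q) (Finset.mem_univ i₀)

lemma aux13_int_phi {Ω : Type*} [MeasurableSpace Ω] {μ : Measure Ω} [IsProbabilityMeasure μ]
    {Φ : ℝ → ℝ} (hΦc : Continuous Φ) {C q : ℝ} (hq : 1 ≤ q)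
    (hΦnn : ∀ x, 0 ≤ x → 0 ≤ Φ x) (hgrowth : ∀ x, 0 ≤ x → Φ x ≤ C * (1 + x ^ q))
    {k : ℕ} (W : Fin k → Ω → ℝ) (hWm : ∀ i, Measurable (W i)) (hWnn : ∀ i ω, 0 ≤ W i ω)
    (hWq : ∀ i, Integrable (fun ω => W i ω ^ q) μ) :
    Integrable (fun ω => Φ (∑ i, W i ω)) μ := by
  have hsum_meas : Measurable (fun ω => ∑ i, W i ω) := Finset.measurable_sum _ fun i _ => hWm i
  have hsq : Integrable (fun ω => ∑ i, W i ω ^ q) μ := integrable_finset_sum _ fun i _ => hWq i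
  have hbound : Integrable (fun ω => C * (1 + (k:ℝ) ^ q * ∑ i, W i ω ^ q)) μ :=
    ((integrable_const (1:ℝ)).add (hsq.const_mul _)).const_mul C
  refine Integrable.mono' hbound (hΦc.measurable.comp hsum_meas).aestronglyMeasurable
    (Filter.Eventually.of_forall fun ω => ?_)
  have hsnn : 0 ≤ ∑ i, W i ω := Finset.sum_nonneg fun i _ => hWnn i ω
  have h1 : ‖Φ (∑ i, W i ω)‖ = Φ (∑ i, W i ω) := by
    rw [Real.norm_eq_abs, abs_of_nonneg (hΦnn _ hsnn)]
  rw [h1]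
  calc Φ (∑ i, W i ω) ≤ C * (1 + (∑ i, W i ω) ^ q) := hgrowth _ hsnn
    _ ≤ C * (1 + (k:ℝ) ^ q * ∑ i, W i ω ^ q) := by
        have hC0 : 0 ≤ C := by
          by_contra h
          have := hgrowth 0 le_rfl
          have h2 := hΦnn 0 le_rfl
          have : C * (1 + (0:ℝ) ^ q) ≤ C := by
            rw [Real.zero_rpow (by linarith : q ≠ 0)]; ring_nf; exact le_rfl
          linarith
        exact mul_le_mul_of_nonneg_left (by linarith [aux13_sum_rpow_le (fun i => W i ω) (fun i => hWnn i ω) hq]) hC0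

lemma aux13_onedim (ν : Measure ℝ) [IsProbabilityMeasure ν] (hsupp : ∀ᵐ x ∂ν, 0 ≤ x)
    {Φ : ℝ → ℝ} (hΦc : Continuous Φ) (hconv : ConvexOn ℝ (Set.Ici 0) Φ)
    (hdiff : DifferentiableOn ℝ Φ (Set.Ici 0))
    {m n a t : ℝ} (hmpos : 0 < m) (hnpos : 0 < n) (hnm : n ≤ m)
    (hm : ∫ x, x ∂ν = m) (hn : ∫ x, x / (1 + x) ∂ν = n)
    (hid : Integrable (fun x => x) ν)
    (ha : 0 < a) (ht : 0 ≤ t)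
    (hint1 : Integrable (fun x => Φ (t + a * (x / (1 + x) / n))) ν)
    (hint2 : Integrable (fun x => Φ (t + a * (x / m))) ν) :
    ∫ x, Φ (t + a * (x / (1 + x) / n)) ∂ν ≤ ∫ x, Φ (t + a * (x / m)) ∂ν := by
  set c := derivWithin Φ (Set.Ici (0:ℝ)) (t + a * ((m - n) / (n * m))) with hc
  have hgm : Measurable (fun x : ℝ => x / (1 + x)) :=
    measurable_id.div (measurable_const.add measurable_id)
  have hgint : Integrable (fun x : ℝ => x / (1 + x)) ν := by
    refine Integrable.mono' (integrable_const (1:ℝ)) hgm.aestronglyMeasurable ?_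
    filter_upwards [hsupp] with x hx
    have h1x : (0:ℝ) < 1 + x := by linarith
    rw [Real.norm_eq_abs, abs_of_nonneg (div_nonneg hx h1x.le)]
    rw [div_le_one h1x]; linarith
  have ht₀ : 0 ≤ (m - n) / (n * m) := div_nonneg (by linarith) (by positivity)
  -- pointwise inequality
  have hpt : ∀ᵐ x ∂ν, Φ (t + a * (x / (1 + x) / n)) ≤
      Φ (t + a * (x / m)) - c * a * (x / m - x / (1 + x) / n) := by
    filter_upwards [hsupp] with x hx
    have h1x : (0:ℝ) < 1 + x := by linarith
    have hgnn : 0 ≤ x / (1 + x) := div_nonneg hx h1x.le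
    have hynn : 0 ≤ t + a * (x / (1 + x) / n) := by positivity
    have hxnn : 0 ≤ t + a * (x / m) := by positivity
    have hcase : ((t + a * ((m - n) / (n * m)) ≤ t + a * (x / (1 + x) / n)) ∧
          t + a * (x / (1 + x) / n) ≤ t + a * (x / m)) ∨
        ((t + a * (x / m) ≤ t + a * (x / (1 + x) / n)) ∧
          t + a * (x / (1 + x) / n) ≤ t + a * ((m - n) / (n * m))) := by
      rcases le_total ((m - n) / n) x with hge | hle
      · left
        have hmn' : m - n ≤ x * n := by
          rw [div_le_iff₀ hnpos] at hge; linarith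
        constructor
        · apply add_le_add_right
          apply mul_le_mul_of_nonneg_left _ ha.le
          rw [div_div, div_le_div_iff₀ (by positivity) (by positivity)]
          nlinarith
        · apply add_le_add_right
          apply mul_le_mul_of_nonneg_left _ ha.le
          rw [div_div, div_le_div_iff₀ (by positivity) hmpos]
          nlinarith
      · right
        have hmn' : x * n ≤ m - n := by
          rw [le_div_iff₀ hnpos] at hle; linarith
        constructor
        · apply add_le_add_right
          apply mul_le_mul_of_nonneg_left _ ha.le
          rw [div_div, div_le_div_iff₀ hmpos (by positivity)]
          nlinarith
        · apply add_le_add_right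
          apply mul_le_mul_of_nonneg_left _ ha.le
          rw [div_div, div_le_div_iff₀ (by positivity) (by positivity)]
          nlinarith
    have htan := aux13_tangent hconv hdiff (by positivity) hxnn hynn hcase
    have harr : t + a * (x / m) - (t + a * (x / (1 + x) / n)) =
        a * (x / m - x / (1 + x) / n) := by ring
    rw [harr] at htan
    nlinarith [htan]
  have hL : Integrable (fun x => x / m - x / (1 + x) / n) ν :=
    (hid.div_const m).sub (hgint.div_const n)
  have hRHS : Integrable
      (fun x => Φ (t + a * (x / m)) - c * a * (x / m - x / (1 + x) / n)) ν :=
    hint2.sub (hL.const_mul _)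
  have hmono := integral_mono_ae hint1 hRHS hpt
  rw [integral_sub hint2 (hL.const_mul _), integral_const_mul] at hmono
  have hLint : ∫ x, (x / m - x / (1 + x) / n) ∂ν = 0 := by
    rw [integral_sub (hid.div_const m) (hgint.div_const n), integral_div, integral_div, hm, hn,
      div_self hmpos.ne', div_self hnpos.ne']
    ring
  rw [hLint, mul_zero, sub_zero] at hmono
  exact hmono

lemma aux13_swap {Ω : Type*} [MeasurableSpace Ω] {μ : Measure Ω} [IsProbabilityMeasure μ]
    {Φ : ℝ → ℝ} (hΦc : Continuous Φ) (hconv : ConvexOn ℝ (Set.Ici 0) Φ)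
    (hdiff : DifferentiableOn ℝ Φ (Set.Ici 0))
    {T X : Ω → ℝ} (hTm : Measurable T) (hTnn : ∀ ω, 0 ≤ T ω)
    (hXm : Measurable X) (hXnn : ∀ ω, 0 ≤ X ω) (hXint : Integrable X μ)
    (hTX : IndepFun T X μ)
    {m n a : ℝ} (hmpos : 0 < m) (hnpos : 0 < n) (hnm : n ≤ m)
    (hm : ∫ ω, X ω ∂μ = m) (hn : ∫ ω, X ω / (1 + X ω) ∂μ = n) (ha : 0 < a)
    (hint1 : Integrable (fun ω => Φ (T ω + a * (X ω / (1 + X ω) / n))) μ)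
    (hint2 : Integrable (fun ω => Φ (T ω + a * (X ω / m))) μ) :
    ∫ ω, Φ (T ω + a * (X ω / (1 + X ω) / n)) ∂μ ≤ ∫ ω, Φ (T ω + a * (X ω / m)) ∂μ := by
  have hgm : Measurable (fun x : ℝ => x / (1 + x)) :=
    measurable_id.div (measurable_const.add measurable_id)
  have hFm : Measurable (fun p : ℝ × ℝ => Φ (p.1 + a * (p.2 / (1 + p.2) / n))) :=
    hΦc.measurable.comp (measurable_fst.add (((hgm.comp measurable_snd).div_const n).const_mul a))
  have hGm : Measurable (fun p : ℝ × ℝ => Φ (p.1 + a * (p.2 / m))) :=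
    hΦc.measurable.comp (measurable_fst.add ((measurable_snd.div_const m).const_mul a))
  have hpairm : Measurable (fun ω => (T ω, X ω)) := hTm.prodMk hXm
  have hmap : μ.map (fun ω => (T ω, X ω)) = (μ.map T).prod (μ.map X) :=
    (indepFun_iff_map_prod_eq_prod_map_map hTm.aemeasurable hXm.aemeasurable).mp hTX
  have hPT : IsProbabilityMeasure (μ.map T) := Measure.isProbabilityMeasure_map hTm.aemeasurable
  have hPX : IsProbabilityMeasure (μ.map X) := Measure.isProbabilityMeasure_map hXm.aemeasurable
  have hIF : Integrable (fun p : ℝ × ℝ => Φ (p.1 + a * (p.2 / (1 + p.2) / n)))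
      ((μ.map T).prod (μ.map X)) := by
    rw [← hmap]
    exact (integrable_map_measure hFm.aestronglyMeasurable hpairm.aemeasurable).mpr hint1
  have hIG : Integrable (fun p : ℝ × ℝ => Φ (p.1 + a * (p.2 / m)))
      ((μ.map T).prod (μ.map X)) := by
    rw [← hmap]
    exact (integrable_map_measure hGm.aestronglyMeasurable hpairm.aemeasurable).mpr hint2
  have e1 : ∫ ω, Φ (T ω + a * (X ω / (1 + X ω) / n)) ∂μ =
      ∫ p, Φ (p.1 + a * (p.2 / (1 + p.2) / n)) ∂((μ.map T).prod (μ.map X)) := by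
    rw [← hmap, integral_map hpairm.aemeasurable hFm.aestronglyMeasurable]
  have e2 : ∫ ω, Φ (T ω + a * (X ω / m)) ∂μ =
      ∫ p, Φ (p.1 + a * (p.2 / m)) ∂((μ.map T).prod (μ.map X)) := by
    rw [← hmap, integral_map hpairm.aemeasurable hGm.aestronglyMeasurable]
  rw [e1, e2, integral_prod _ hIF, integral_prod _ hIG]
  have hesupp : ∀ᵐ t ∂(μ.map T), 0 ≤ t :=
    (ae_map_iff (p := fun y : ℝ => 0 ≤ y) hTm.aemeasurable measurableSet_Ici).mpr
      (Filter.Eventually.of_forall hTnn)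
  have hxsupp : ∀ᵐ x ∂(μ.map X), 0 ≤ x :=
    (ae_map_iff (p := fun y : ℝ => 0 ≤ y) hXm.aemeasurable measurableSet_Ici).mpr
      (Filter.Eventually.of_forall hXnn)
  have hxid : Integrable (fun x => x) (μ.map X) :=
    (integrable_map_measure (g := fun x : ℝ => x) measurable_id'.aestronglyMeasurable
      hXm.aemeasurable).mpr hXint
  have hmm : ∫ x, x ∂(μ.map X) = m := by
    rw [integral_map (f := fun x : ℝ => x) hXm.aemeasurable measurable_id'.aestronglyMeasurable]
    exact hm
  have hnn' : ∫ x, x / (1 + x) ∂(μ.map X) = n := by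
    rw [integral_map hXm.aemeasurable hgm.aestronglyMeasurable]; exact hn
  refine integral_mono_ae hIF.integral_prod_left hIG.integral_prod_left ?_
  filter_upwards [hIF.prod_right_ae, hIG.prod_right_ae, hesupp] with t h1 h2 ht
  exact aux13_onedim (μ.map X) hxsupp hΦc hconv hdiff hmpos hnpos hnm hmm hnn' hxid ha ht h1 h2

theorem stmt_13 {Ω : Type*} [MeasurableSpace Ω] (μ : Measure Ω)
    [IsProbabilityMeasure μ]
    (k : ℕ) (ξ : Fin k → Ω → ℝ)
    (hmeas : ∀ i, Measurable (ξ i))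
    (hindep : iIndepFun ξ μ)
    (hnn : ∀ i ω, 0 ≤ ξ i ω)
    (hint : ∀ i, Integrable (ξ i) μ)
    (hpos : ∀ i, 0 < ∫ ω, ξ i ω ∂μ)
    (a : Fin k → ℝ) (ha : ∀ i, 0 < a i)
    (φ : ℝ → ℝ) (hφnn : ∀ x, 0 ≤ x → 0 ≤ φ x)
    (hconv : ConvexOn ℝ (Set.Ici 0) φ)
    (hdiff : ContDiffOn ℝ 1 φ (Set.Ici 0))
    (C q : ℝ) (hC : 0 < C) (hq : 1 ≤ q)
    (hgrowth : ∀ x, 0 ≤ x → φ x ≤ C * (1 + x ^ q))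
    (hmom : ∀ i, Integrable (fun ω => ξ i ω ^ q) μ) :
    ∫ ω, φ (∑ i, a i * ((ξ i ω / (1 + ξ i ω)) / ∫ ω', ξ i ω' / (1 + ξ i ω') ∂μ)) ∂μ ≤
      ∫ ω, φ (∑ i, a i * (ξ i ω / ∫ ω', ξ i ω' ∂μ)) ∂μ := by
  classical
  set m : Fin k → ℝ := fun i => ∫ ω, ξ i ω ∂μ with hmdef
  set n : Fin k → ℝ := fun i => ∫ ω, ξ i ω / (1 + ξ i ω) ∂μ with hndef
  set Φ : ℝ → ℝ := fun x => φ (max 0 x) with hΦdef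
  have hΦeq : ∀ x, 0 ≤ x → Φ x = φ x := fun x hx => by
    simp only [hΦdef, max_eq_right hx]
  have hΦc : Continuous Φ :=
    (hdiff.continuousOn).comp_continuous (continuous_const.max continuous_id)
      (fun x => Set.mem_Ici.mpr (le_max_left _ _))
  have hΦconv : ConvexOn ℝ (Set.Ici 0) Φ := by
    refine ⟨convex_Ici 0, fun x hx y hy p r hp hr hpr => ?_⟩
    have hx' : (0:ℝ) ≤ x := hx
    have hy' : (0:ℝ) ≤ y := hy
    have hc : (0:ℝ) ≤ p • x + r • y :=
      add_nonneg (mul_nonneg hp hx') (mul_nonneg hr hy')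
    rw [smul_eq_mul, smul_eq_mul] at *
    rw [hΦeq _ hc, hΦeq _ hx', hΦeq _ hy']
    exact hconv.2 hx hy hp hr hpr
  have hΦdiff : DifferentiableOn ℝ Φ (Set.Ici 0) :=
    (hdiff.differentiableOn one_ne_zero).congr (fun x hx => hΦeq x hx)
  have hΦnn : ∀ x, 0 ≤ x → 0 ≤ Φ x := fun x hx => by rw [hΦeq x hx]; exact hφnn x hx
  have hΦgrowth : ∀ x, 0 ≤ x → Φ x ≤ C * (1 + x ^ q) := fun x hx => by
    rw [hΦeq x hx]; exact hgrowth x hx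
  -- basic facts about g ∘ ξ i
  have h1x : ∀ i ω, (0:ℝ) < 1 + ξ i ω := fun i ω => by linarith [hnn i ω]
  have hgnn : ∀ i ω, 0 ≤ ξ i ω / (1 + ξ i ω) := fun i ω =>
    div_nonneg (hnn i ω) (h1x i ω).le
  have hgle1 : ∀ i ω, ξ i ω / (1 + ξ i ω) ≤ 1 := fun i ω => by
    rw [div_le_one (h1x i ω)]; linarith [hnn i ω]
  have hglex : ∀ i ω, ξ i ω / (1 + ξ i ω) ≤ ξ i ω := fun i ω => by
    rw [div_le_iff₀ (h1x i ω)]; nlinarith [hnn i ω]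
  have hgm : ∀ i, Measurable (fun ω => ξ i ω / (1 + ξ i ω)) := fun i =>
    (hmeas i).div (measurable_const.add (hmeas i))
  have hgint : ∀ i, Integrable (fun ω => ξ i ω / (1 + ξ i ω)) μ := fun i => by
    refine Integrable.mono' (integrable_const (1:ℝ)) (hgm i).aestronglyMeasurable ?_
    exact Filter.Eventually.of_forall fun ω => by
      rw [Real.norm_eq_abs, abs_of_nonneg (hgnn i ω)]; exact hgle1 i ω
  have hmpos : ∀ i, 0 < m i := hpos
  have hnm : ∀ i, n i ≤ m i := fun i =>
    integral_mono (hgint i) (hint i) (fun ω => hglex i ω)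
  have hnpos : ∀ i, 0 < n i := by
    intro i
    rcases (integral_nonneg (f := fun ω => ξ i ω / (1 + ξ i ω)) (fun ω => hgnn i ω)).lt_or_eq with h | h
    · exact h
    · exfalso
      have hz := (integral_eq_zero_iff_of_nonneg (fun ω => hgnn i ω) (hgint i)).mp h.symm
      have hξ0 : ξ i =ᵐ[μ] 0 := by
        filter_upwards [hz] with ω hω
        simp only [Pi.zero_apply] at hω ⊢
        rcases div_eq_zero_iff.mp hω with h' | h'
        · exact h'
        · exact absurd h' (h1x i ω).ne'
      have : m i = 0 := by
        rw [hmdef]; simp only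
        rw [integral_congr_ae hξ0]
        simp
      exact absurd this (hmpos i).ne'
  -- the mixed family
  set mix : Finset (Fin k) → Fin k → Ω → ℝ := fun s i ω =>
    if i ∈ s then a i * (ξ i ω / (1 + ξ i ω) / n i) else a i * (ξ i ω / m i) with hmixdef
  have hmixm : ∀ s i, Measurable (mix s i) := by
    intro s i
    by_cases hi : i ∈ s <;> simp only [hmixdef, hi, if_true, if_false]
    · exact (((hgm i).div_const _).const_mul _)
    · exact (((hmeas i).div_const _).const_mul _)
  have hmixnn : ∀ s i ω, 0 ≤ mix s i ω := by
    intro s i ω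
    by_cases hi : i ∈ s <;> simp only [hmixdef, hi, if_true, if_false]
    · exact mul_nonneg (ha i).le (div_nonneg (hgnn i ω) (hnpos i).le)
    · exact mul_nonneg (ha i).le (div_nonneg (hnn i ω) (hmpos i).le)
  have hmixq : ∀ s i, Integrable (fun ω => mix s i ω ^ q) μ := by
    intro s i
    have hqm : Measurable (fun x : ℝ => x ^ q) :=
      (Real.continuous_rpow_const (by linarith : (0:ℝ) ≤ q)).measurable
    by_cases hi : i ∈ s <;> simp only [hmixdef, hi, if_true, if_false]
    · refine Integrable.mono' (integrable_const ((a i / n i) ^ q))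
        (hqm.comp (((hgm i).div_const _).const_mul _)).aestronglyMeasurable ?_
      refine Filter.Eventually.of_forall fun ω => ?_
      have h0 : 0 ≤ a i * (ξ i ω / (1 + ξ i ω) / n i) :=
        mul_nonneg (ha i).le (div_nonneg (hgnn i ω) (hnpos i).le)
      rw [Real.norm_eq_abs, abs_of_nonneg (Real.rpow_nonneg h0 q)]
      apply Real.rpow_le_rpow h0 _ (by linarith)
      rw [div_eq_mul_one_div (a i) (n i)]
      apply mul_le_mul_of_nonneg_left _ (ha i).le
      rw [div_le_div_iff₀ (hnpos i) (hnpos i)]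
      nlinarith [hgle1 i ω, hnpos i]
    · have heq : (fun ω => (a i * (ξ i ω / m i)) ^ q) =
          fun ω => (a i / m i) ^ q * ξ i ω ^ q := by
        funext ω
        rw [show a i * (ξ i ω / m i) = (a i / m i) * ξ i ω by ring,
          Real.mul_rpow (div_nonneg (ha i).le (hmpos i).le) (hnn i ω)]
      rw [heq]
      exact (hmom i).const_mul _
  have hIsum : ∀ s, Integrable (fun ω => Φ (∑ i, mix s i ω)) μ := fun s =>
    aux13_int_phi hΦc hq hΦnn hΦgrowth (mix s) (hmixm s) (hmixnn s) (hmixq s)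
  -- the induction
  have claim : ∀ s : Finset (Fin k),
      ∫ ω, Φ (∑ i, mix s i ω) ∂μ ≤ ∫ ω, Φ (∑ i, mix (∅ : Finset (Fin k)) i ω) ∂μ := by
    intro s
    induction s using Finset.induction_on with
    | empty => exact le_rfl
    | @insert j s hj ih =>
      refine le_trans ?_ ih
      set T : Ω → ℝ := fun ω => ∑ i ∈ Finset.univ.erase j, mix s i ω with hTdef
      have e₁ : ∀ ω, ∑ i, mix (insert j s) i ω = T ω + a j * (ξ j ω / (1 + ξ j ω) / n j) := by
        intro ω
        rw [← Finset.sum_erase_add Finset.univ _ (Finset.mem_univ j)]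
        congr 1
        · refine Finset.sum_congr rfl fun i hi => ?_
          have hij : i ≠ j := (Finset.mem_erase.mp hi).1
          simp only [hmixdef, Finset.mem_insert, hij, false_or]
        · simp only [hmixdef, Finset.mem_insert_self, if_true]
      have e₂ : ∀ ω, ∑ i, mix s i ω = T ω + a j * (ξ j ω / m j) := by
        intro ω
        rw [← Finset.sum_erase_add Finset.univ _ (Finset.mem_univ j)]
        congr 1
        simp only [hmixdef, hj, if_false]
      have hrw₁ : (fun ω => Φ (∑ i, mix (insert j s) i ω)) =
          fun ω => Φ (T ω + a j * (ξ j ω / (1 + ξ j ω) / n j)) := funext fun ω => by rw [e₁ ω]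
      have hrw₂ : (fun ω => Φ (∑ i, mix s i ω)) =
          fun ω => Φ (T ω + a j * (ξ j ω / m j)) := funext fun ω => by rw [e₂ ω]
      have hTm : Measurable T := Finset.measurable_sum _ fun i _ => hmixm s i
      have hTnn : ∀ ω, 0 ≤ T ω := fun ω => Finset.sum_nonneg fun i _ => hmixnn s i ω
      -- independence of T and ξ j
      have hTX : IndepFun T (ξ j) μ := by
        have hfin := hindep.indepFun_finset (Finset.univ.erase j) {j}
          (Finset.disjoint_singleton_right.mpr (Finset.notMem_erase j _)) hmeas
        have hφ'm : Measurable (fun (v : ((Finset.univ.erase j : Finset (Fin k)) : Type) → ℝ) =>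
            ∑ i : ((Finset.univ.erase j : Finset (Fin k)) : Type),
              (if (i : Fin k) ∈ s then a i * (v i / (1 + v i) / n i)
                else a i * (v i / m i))) := by
          refine Finset.measurable_sum _ fun i _ => ?_
          by_cases hi : (i : Fin k) ∈ s <;> simp only [hi, if_true, if_false]
          · exact (((measurable_pi_apply i).div
              (measurable_const.add (measurable_pi_apply i))).div_const _).const_mul _
          · exact ((measurable_pi_apply i).div_const _).const_mul _
        have hψ'm : Measurable (fun (v : (({j} : Finset (Fin k)) : Type) → ℝ) =>
            v ⟨j, Finset.mem_singleton_self j⟩) := measurable_pi_apply _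
        have hcomp := hfin.comp hφ'm hψ'm
        have heqT : ((fun (v : ((Finset.univ.erase j : Finset (Fin k)) : Type) → ℝ) =>
            ∑ i : ((Finset.univ.erase j : Finset (Fin k)) : Type),
              (if (i : Fin k) ∈ s then a i * (v i / (1 + v i) / n i)
                else a i * (v i / m i))) ∘ (fun ω (i : ((Finset.univ.erase j : Finset (Fin k)) : Type)) =>
                  ξ i ω)) = T := by
          funext ω
          exact Finset.sum_coe_sort (Finset.univ.erase j) (fun x => mix s x ω)
        have heqX : ((fun (v : (({j} : Finset (Fin k)) : Type) → ℝ) =>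
            v ⟨j, Finset.mem_singleton_self j⟩) ∘
            (fun ω (i : (({j} : Finset (Fin k)) : Type)) => ξ i ω)) = ξ j := rfl
        rw [heqT, heqX] at hcomp
        exact hcomp
      have hi₁ : Integrable (fun ω => Φ (T ω + a j * (ξ j ω / (1 + ξ j ω) / n j))) μ := by
        rw [← hrw₁]; exact hIsum (insert j s)
      have hi₂ : Integrable (fun ω => Φ (T ω + a j * (ξ j ω / m j))) μ := by
        rw [← hrw₂]; exact hIsum s
      calc ∫ ω, Φ (∑ i, mix (insert j s) i ω) ∂μ
          = ∫ ω, Φ (T ω + a j * (ξ j ω / (1 + ξ j ω) / n j)) ∂μ := by rw [hrw₁]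
        _ ≤ ∫ ω, Φ (T ω + a j * (ξ j ω / m j)) ∂μ :=
            aux13_swap hΦc hΦconv hΦdiff hTm hTnn (hmeas j) (hnn j) (hint j) hTX
              (hmpos j) (hnpos j) (hnm j) rfl rfl (ha j) hi₁ hi₂
        _ = ∫ ω, Φ (∑ i, mix s i ω) ∂μ := by rw [hrw₂]
  -- conclude
  have hfinal := claim Finset.univ
  have hL : (fun ω => φ (∑ i, a i * (ξ i ω / (1 + ξ i ω) / n i))) =
      fun ω => Φ (∑ i, mix Finset.univ i ω) := by
    funext ω
    have hs : (∑ i, mix Finset.univ i ω) = ∑ i, a i * (ξ i ω / (1 + ξ i ω) / n i) :=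
      Finset.sum_congr rfl fun i _ => by simp only [hmixdef, Finset.mem_univ, if_true]
    rw [hs, hΦeq _ (Finset.sum_nonneg fun i _ =>
      mul_nonneg (ha i).le (div_nonneg (hgnn i ω) (hnpos i).le))]
  have hR : (fun ω => φ (∑ i, a i * (ξ i ω / m i))) =
      fun ω => Φ (∑ i, mix (∅ : Finset (Fin k)) i ω) := by
    funext ω
    have hs : (∑ i, mix (∅ : Finset (Fin k)) i ω) = ∑ i, a i * (ξ i ω / m i) :=
      Finset.sum_congr rfl fun i _ => by simp only [hmixdef, Finset.notMem_empty, if_false]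
    rw [hs, hΦeq _ (Finset.sum_nonneg fun i _ =>
      mul_nonneg (ha i).le (div_nonneg (hnn i ω) (hmpos i).le))]
  calc ∫ ω, φ (∑ i, a i * (ξ i ω / (1 + ξ i ω) / n i)) ∂μ
      = ∫ ω, Φ (∑ i, mix Finset.univ i ω) ∂μ := by rw [hL]
    _ ≤ ∫ ω, Φ (∑ i, mix (∅ : Finset (Fin k)) i ω) ∂μ := hfinal
    _ = ∫ ω, φ (∑ i, a i * (ξ i ω / m i)) ∂μ := by rw [← hR]
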